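/- For all natural numbers n ≥ k and every integer-valued polynomial P of degree ≤ n, the identity P^{(k)} = ∑_{m=k}^{n} (-1)^{m-k} F_{m,k} Δ^m P holds, where Δ is the forward difference operator ΔP(X) = P(X+1) - P(X). -/

import Mathlib

open Polynomial

/-- A polynomial `P ∈ ℚ[X]` is integer-valued if it takes integer values at all integers. -/
def IntValued (P : Polynomial ℚ) : Prop := ∀ m : ℤ, ∃ z : ℤ, P.eval (m : ℚ) = (z : ℚ)

/-- `F n k = ∑ 1/(i₁⋯i_k)` over ordered `k`-tuples of positive integers with sum `n`. -/
def F (n k : ℕ) : ℚ :=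
  ∑ f ∈ (Finset.Nat.antidiagonalTuple k n).filter (fun f => ∀ j, f j ≠ 0),
    ∏ j, (1 : ℚ) / (f j : ℚ)

/-- The forward difference operator `ΔP(X) = P(X+1) - P(X)`. -/
noncomputable def deltaOp (P : Polynomial ℚ) : Polynomial ℚ := P.comp (X + 1) - P

section Aux

open Finset

noncomputable def Dlin : Module.End ℚ (Polynomial ℚ) := Polynomial.derivative

noncomputable def app (g P : Polynomial ℚ) : Polynomial ℚ := (Polynomial.aeval Dlin g) P

lemma app_eq_sum (g P : Polynomial ℚ) {N : ℕ} (hN : g.natDegree < N) :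
    app g P = ∑ i ∈ range N, g.coeff i • (derivative^[i] P) := by
  rw [app, aeval_eq_sum_range' hN, LinearMap.sum_apply]
  exact Finset.sum_congr rfl fun i _ => by
    rw [LinearMap.smul_apply, Module.End.pow_apply]; rfl

lemma app_mul (g h P : Polynomial ℚ) : app (g * h) P = app g (app h P) := by
  rw [app, app, app, map_mul, Module.End.mul_apply]

lemma app_X_pow (k : ℕ) (P : Polynomial ℚ) : app (X ^ k) P = derivative^[k] P := by
  rw [app, map_pow, aeval_X, Module.End.pow_apply]; rfl

lemma app_one (P : Polynomial ℚ) : app 1 P = P := by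
  rw [app, map_one, Module.End.one_apply]

lemma app_C_mul (c : ℚ) (g P : Polynomial ℚ) : app (C c * g) P = c • app g P := by
  rw [app, app, map_mul, aeval_C, Module.End.mul_apply, Module.algebraMap_end_apply]

lemma app_sum {ι : Type*} (s : Finset ι) (g : ι → Polynomial ℚ) (P : Polynomial ℚ) :
    app (∑ i ∈ s, g i) P = ∑ i ∈ s, app (g i) P := by
  rw [app, map_sum, LinearMap.sum_apply]; rfl

lemma natDegree_iter_deriv (P : Polynomial ℚ) (i : ℕ) :
    (derivative^[i] P).natDegree ≤ P.natDegree := by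
  induction i with
  | zero => rfl
  | succ i ih =>
    rw [Function.iterate_succ_apply']
    exact le_trans (natDegree_derivative_le _) (le_trans (Nat.sub_le _ _) ih)

lemma natDegree_app_le (g P : Polynomial ℚ) : (app g P).natDegree ≤ P.natDegree := by
  rw [app_eq_sum g P (Nat.lt_succ_self _)]
  exact natDegree_sum_le_of_forall_le _ _ fun i _ =>
    (natDegree_smul_le _ _).trans (natDegree_iter_deriv P i)

lemma app_congr {n : ℕ} {g h P : Polynomial ℚ} (hgh : ∀ i ≤ n, g.coeff i = h.coeff i)
    (hP : P.natDegree ≤ n) : app g P = app h P := by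
  set N := max g.natDegree h.natDegree + 1 with hNdef
  rw [app_eq_sum g P (by omega : g.natDegree < N),
      app_eq_sum h P (by omega : h.natDegree < N)]
  refine Finset.sum_congr rfl fun i _ => ?_
  rcases le_or_gt i n with hi | hi
  · rw [hgh i hi]
  · rw [iterate_derivative_eq_zero (lt_of_le_of_lt hP hi), smul_zero, smul_zero]

noncomputable def Efun (n : ℕ) : Polynomial ℚ :=
  ∑ i ∈ Icc 1 n, C ((i.factorial : ℚ)⁻¹) * X ^ i

noncomputable def Lfun (n : ℕ) : Polynomial ℚ :=
  ∑ m ∈ Icc 1 n, C ((-1 : ℚ) ^ (m - 1) * (m : ℚ)⁻¹) * X ^ m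

lemma hasseDeriv_eq_inv_factorial_smul (i : ℕ) (P : Polynomial ℚ) :
    hasseDeriv i P = (i.factorial : ℚ)⁻¹ • (derivative^[i] P) := by
  have h := congrFun (factorial_smul_hasseDeriv (R := ℚ) i) P
  simp only [LinearMap.smul_apply] at h
  rw [← h, ← Nat.cast_smul_eq_nsmul ℚ, smul_smul, inv_mul_cancel₀, one_smul]
  exact_mod_cast i.factorial_ne_zero

lemma taylor_one_eq_sum (P : Polynomial ℚ) {N : ℕ} (hN : P.natDegree < N) :
    P.comp (X + 1) = ∑ i ∈ range N, hasseDeriv i P := by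
  have hc : (X + 1 : Polynomial ℚ) = X + C 1 := by rw [map_one]
  ext j
  rw [hc, ← taylor_apply, taylor_coeff, finset_sum_coeff]
  have hd : ∀ i : ℕ, (hasseDeriv i P).natDegree < N :=
    fun i => lt_of_le_of_lt ((natDegree_hasseDeriv_le P i).trans (Nat.sub_le _ _)) hN
  rw [eval_eq_sum_range' (hd j) 1]
  refine Finset.sum_congr rfl fun m _ => ?_
  rw [one_pow, mul_one, hasseDeriv_coeff, hasseDeriv_coeff]
  congr 1
  · have : m + j - j = m := by omega
    rw [← Nat.choose_symm (Nat.le_add_left j m), this, add_comm]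
  · rw [add_comm]

lemma app_Efun (n : ℕ) (P : Polynomial ℚ) :
    app (Efun n) P = ∑ i ∈ Icc 1 n, (i.factorial : ℚ)⁻¹ • (derivative^[i] P) := by
  rw [app, Efun, map_sum, LinearMap.sum_apply]
  refine Finset.sum_congr rfl fun i _ => ?_
  simp [map_mul, map_pow, aeval_X, aeval_C, Module.End.mul_apply, Module.End.pow_apply,
    Module.algebraMap_end_apply, Dlin]

lemma deltaOp_eq_app {n : ℕ} {P : Polynomial ℚ} (hP : P.natDegree ≤ n) :
    deltaOp P = app (Efun n) P := by
  rw [deltaOp, taylor_one_eq_sum P (Nat.lt_succ_of_le hP), app_Efun]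
  rw [range_eq_Ico, Finset.sum_eq_sum_Ico_succ_bot (Nat.succ_pos n), hasseDeriv_zero,
    LinearMap.id_apply, Nat.succ_eq_add_one, Finset.Ico_add_one_right_eq_Icc, add_sub_cancel_left]
  exact Finset.sum_congr rfl fun i _ => hasseDeriv_eq_inv_factorial_smul i P

lemma delta_iter_eq_app {n : ℕ} {P : Polynomial ℚ} (hP : P.natDegree ≤ n) (m : ℕ) :
    deltaOp^[m] P = app ((Efun n) ^ m) P := by
  induction m with
  | zero => rw [Function.iterate_zero_apply, pow_zero, app_one]
  | succ m ih =>
    rw [Function.iterate_succ_apply', ih,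
      deltaOp_eq_app ((natDegree_app_le _ _).trans hP), pow_succ', app_mul]

lemma X_dvd_Efun (n : ℕ) : X ∣ Efun n :=
  Finset.dvd_sum fun i hi => Dvd.dvd.mul_left
    (dvd_pow_self X (by simp at hi; omega)) _

lemma X_dvd_Lfun (n : ℕ) : X ∣ Lfun n :=
  Finset.dvd_sum fun i hi => Dvd.dvd.mul_left
    (dvd_pow_self X (by simp at hi; omega)) _

lemma deriv_Lfun (n : ℕ) : derivative (Lfun n) = ∑ j ∈ range n, (-X : Polynomial ℚ) ^ j := by
  rw [Lfun, derivative_sum]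
  rw [← Finset.Ico_add_one_right_eq_Icc, Finset.sum_Ico_eq_sum_range]
  refine Finset.sum_congr (by norm_num) fun j _ => ?_
  rw [derivative_C_mul_X_pow]
  have hidx : 1 + j - 1 = j := by omega
  have hne : ((1 + j : ℕ) : ℚ) ≠ 0 := Nat.cast_ne_zero.mpr (by omega)
  have hc : ((-1 : ℚ)) ^ (1 + j - 1) * ((1 + j : ℕ) : ℚ)⁻¹ * ((1 + j : ℕ) : ℚ) = (-1) ^ j := by
    rw [hidx]
    field_simp
  rw [hc, hidx, neg_pow (X : Polynomial ℚ) j, map_pow, map_neg, map_one]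

lemma deriv_Efun (n : ℕ) :
    derivative (Efun n) = 1 + Efun n - C ((n.factorial : ℚ)⁻¹) * X ^ n := by
  have h1 : (1 : Polynomial ℚ) + Efun n = ∑ i ∈ range (n+1), C ((i.factorial : ℚ)⁻¹) * X ^ i := by
    rw [range_eq_Ico, Finset.sum_eq_sum_Ico_succ_bot (Nat.succ_pos n), Nat.succ_eq_add_one, Finset.Ico_add_one_right_eq_Icc]
    simp [Efun]
  rw [h1, Finset.sum_range_succ, add_sub_cancel_right, Efun, derivative_sum]
  rw [← Finset.Ico_add_one_right_eq_Icc, Finset.sum_Ico_eq_sum_range]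
  refine Finset.sum_congr (by norm_num) fun j _ => ?_
  rw [derivative_C_mul_X_pow, (by omega : 1 + j - 1 = j)]
  congr 1
  have : ((1 + j).factorial : ℚ) = (1 + j : ℚ) * (j.factorial : ℚ) := by
    rw [add_comm 1 j, Nat.factorial_succ]; push_cast; ring
  rw [this]
  have hj : (1 + j : ℚ) ≠ 0 := by positivity
  have hf : (j.factorial : ℚ) ≠ 0 := by exact_mod_cast j.factorial_ne_zero
  push_cast
  field_simp

lemma geom_aux (n : ℕ) :
    (∑ j ∈ range n, (-X : Polynomial ℚ) ^ j) * (X + 1) = 1 - (-X) ^ n := by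
  have h := geom_sum_mul (-X : Polynomial ℚ) n
  linear_combination -h

lemma key_dvd (n : ℕ) : X ^ (n + 1) ∣ (Lfun n).comp (Efun n) - X := by
  obtain ⟨Q, hQ⟩ := X_dvd_Efun n
  set E := Efun n with hE
  set L := Lfun n with hL
  have hgeomE : ((derivative L).comp E) * (E + 1) = 1 - (-E) ^ n := by
    have h2 := congrArg (fun p => p.comp E) (geom_aux n)
    simp only [mul_comp, add_comp, X_comp, one_comp, sub_comp, pow_comp, neg_comp] at h2
    rw [deriv_Lfun]
    exact h2
  have hE' := deriv_Efun n
  have hmain : (1 + E) * derivative (L.comp E - X) =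
      -(C ((n.factorial : ℚ)⁻¹) * X ^ n) - (-E) ^ n * derivative E := by
    rw [derivative_sub, derivative_comp, derivative_X]
    linear_combination derivative E * hgeomE + hE'
  have hdvd1 : X ^ n ∣ (1 + E) * derivative (L.comp E - X) := by
    rw [hmain]
    refine dvd_sub (dvd_neg.mpr (Dvd.dvd.mul_left dvd_rfl _))
      (Dvd.dvd.mul_right (pow_dvd_pow_of_dvd (dvd_neg.mpr (X_dvd_Efun n)) n) _)
  have hcop : IsCoprime ((X : Polynomial ℚ) ^ n) (1 + E) := by
    refine IsCoprime.pow_left ⟨-Q, 1, ?_⟩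
    rw [hQ]; ring
  have hdvd2 : X ^ n ∣ derivative (L.comp E - X) := hcop.dvd_of_dvd_mul_left hdvd1
  rw [X_pow_dvd_iff] at hdvd2 ⊢
  intro d hd
  match d with
  | 0 =>
    rw [coeff_sub, coeff_X_zero, coeff_zero_eq_eval_zero, eval_comp, sub_zero]
    have hE0 : eval 0 E = 0 := by rw [hQ]; simp
    have hL0 : eval 0 L = 0 := by
      obtain ⟨QL, hQL⟩ := X_dvd_Lfun n
      rw [hL, hQL]; simp
    rw [hE0, hL0]
  | (j+1) =>
    have hj := hdvd2 j (by omega)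
    rw [coeff_derivative, mul_eq_zero] at hj
    rcases hj with h | h
    · exact h
    · exfalso
      have : (j : ℚ) + 1 ≠ 0 := by positivity
      exact this h

lemma coeff_Lfun (n i : ℕ) :
    (Lfun n).coeff i = if i ∈ Icc 1 n then (-1 : ℚ) ^ (i - 1) * (i : ℚ)⁻¹ else 0 := by
  rw [Lfun, finset_sum_coeff]
  simp only [coeff_C_mul, coeff_X_pow, mul_ite, mul_one, mul_zero]
  rw [Finset.sum_ite_eq (Icc 1 n) i (fun m => (-1 : ℚ) ^ (m - 1) * (m : ℚ)⁻¹)]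

lemma coeff_Lfun_pow (n k m : ℕ) (hm : m ≤ n) :
    ((Lfun n) ^ k).coeff m = (-1 : ℚ) ^ (m - k) * F m k := by
  classical
  have h1 : ((Lfun n) ^ k).coeff m
      = ∑ l ∈ Finset.finsuppAntidiag (range k) m, ∏ i ∈ range k, (Lfun n).coeff (l i) := by
    have := PowerSeries.coeff_pow k m ((Lfun n : Polynomial ℚ) : PowerSeries ℚ)
    rw [← Polynomial.coe_pow, Polynomial.coeff_coe] at this
    rw [this]
    exact Finset.sum_congr rfl fun l _ => Finset.prod_congr rfl fun i _ => by
      rw [Polynomial.coeff_coe]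
  rw [h1]
  rw [← Finset.sum_filter_of_ne (p := fun l => ∀ i ∈ range k, l i ≠ 0)
    (fun l _ hl i hi hz => by
      exact hl (Finset.prod_eq_zero hi (by rw [hz, coeff_Lfun]; simp)))]
  rw [F, Finset.mul_sum]
  refine Finset.sum_nbij' (i := fun l => (fun j : Fin k => l (j : ℕ)))
    (j := fun f => Finsupp.onFinset (range k)
      (fun i => if h : i < k then f ⟨i, h⟩ else 0)
      (fun a ha => by
        rw [Finset.mem_range]
        by_contra hak
        exact ha (dif_neg hak))) ?_ ?_ ?_ ?_ ?_
  · intro l hl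
    rw [Finset.mem_filter, Finset.mem_finsuppAntidiag] at hl
    obtain ⟨⟨hsum, hsupp⟩, hnz⟩ := hl
    rw [Finset.mem_filter]
    constructor
    · rw [Finset.Nat.mem_antidiagonalTuple]
      rw [← hsum, Finset.sum_range fun i => l i]
    · exact fun j => hnz (j : ℕ) (Finset.mem_range.mpr j.isLt)
  · intro f hf
    rw [Finset.mem_filter, Finset.Nat.mem_antidiagonalTuple] at hf
    obtain ⟨hsum, hnz⟩ := hf
    rw [Finset.mem_filter, Finset.mem_finsuppAntidiag]
    refine ⟨⟨?_, fun a ha => ?_⟩, ?_⟩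
    · rw [← hsum, Finset.sum_range fun i => _]
      refine Finset.sum_congr rfl fun j _ => ?_
      simp
    · exact Finsupp.mem_support_iff.mp ha |> fun h => by
        rw [Finset.mem_range]
        by_contra hak
        exact h (dif_neg hak)
    · intro i hi
      rw [Finset.mem_range] at hi
      simp only [Finsupp.onFinset_apply, dif_pos hi]
      exact hnz ⟨i, hi⟩
  · intro l hl
    rw [Finset.mem_filter, Finset.mem_finsuppAntidiag] at hl
    obtain ⟨⟨hsum, hsupp⟩, hnz⟩ := hl
    ext a
    simp only [Finsupp.onFinset_apply]
    by_cases hak : a < k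
    · rw [dif_pos hak]
    · rw [dif_neg hak]
      by_contra h
      have := hsupp (Finsupp.mem_support_iff.mpr (Ne.symm h))
      rw [Finset.mem_range] at this
      exact hak this
  · intro f hf
    funext j
    simp only [Finsupp.onFinset_apply, dif_pos j.isLt]
  · intro l hl
    rw [Finset.mem_filter, Finset.mem_finsuppAntidiag] at hl
    obtain ⟨⟨hsum, hsupp⟩, hnz⟩ := hl
    rw [← Fin.prod_univ_eq_prod_range fun i => (Lfun n).coeff (l i)]
    have hmem : ∀ j : Fin k, l (j : ℕ) ∈ Icc 1 n := by
      intro j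
      rw [Finset.mem_Icc]
      constructor
      · exact Nat.one_le_iff_ne_zero.mpr (hnz _ (Finset.mem_range.mpr j.isLt))
      · refine le_trans ?_ hm
        rw [← hsum]
        exact Finset.single_le_sum (f := fun i => l i) (fun _ _ => Nat.zero_le _)
          (Finset.mem_range.mpr j.isLt)
    have hprod : ∏ j : Fin k, (Lfun n).coeff (l (j : ℕ))
        = ∏ j : Fin k, ((-1 : ℚ) ^ (l (j : ℕ) - 1) * ((l (j : ℕ) : ℚ))⁻¹) := by
      refine Finset.prod_congr rfl fun j _ => ?_
      rw [coeff_Lfun, if_pos (hmem j)]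
    rw [hprod, Finset.prod_mul_distrib, Finset.prod_pow_eq_pow_sum]
    have hsum2 : ∑ j : Fin k, (l (j : ℕ) - 1) = m - k := by
      have h1 : ∀ j : Fin k, 1 ≤ l (j : ℕ) := fun j =>
        Nat.one_le_iff_ne_zero.mpr (hnz _ (Finset.mem_range.mpr j.isLt))
      have h2 : ∑ j : Fin k, l (j : ℕ) = m := by
        rw [← hsum, Finset.sum_range fun i => l i]
      have h3 : ∑ j : Fin k, (l (j : ℕ) - 1) = (∑ j : Fin k, l (j : ℕ)) - ∑ j : Fin k, 1 := by
        rw [eq_tsub_iff_add_eq_of_le, ← Finset.sum_add_distrib]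
        · exact Finset.sum_congr rfl fun j _ => by have := h1 j; omega
        · exact Finset.sum_le_sum fun j _ => h1 j
      rw [h3, h2]
      simp
    rw [hsum2]
    congr 1
    refine Finset.prod_congr rfl fun j _ => ?_
    rw [one_div]

lemma F_eq_zero_of_lt {m k : ℕ} (h : m < k) : F m k = 0 := by
  rw [F]
  refine Finset.sum_eq_zero fun f hf => absurd ?_ (Nat.not_le_of_lt h)
  rw [Finset.mem_filter, Finset.Nat.mem_antidiagonalTuple] at hf
  obtain ⟨hsum, hnz⟩ := hf
  calc k = ∑ _j : Fin k, 1 := by simp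
  _ ≤ ∑ j, f j := Finset.sum_le_sum fun j _ => Nat.one_le_iff_ne_zero.mpr (hnz j)
  _ = m := hsum

end Aux

theorem iterated_derivative_eq_sum_deltaOp (n k : ℕ) (hkn : k ≤ n)
    (P : Polynomial ℚ) (hP : IntValued P) (hdeg : P.natDegree ≤ n) :
    derivative^[k] P =
      ∑ m ∈ Finset.Icc k n, C ((-1 : ℚ) ^ (m - k) * F m k) * deltaOp^[m] P := by
  classical
  set E := Efun n with hE
  set L := Lfun n with hL
  set G : Polynomial ℚ :=
    ∑ m ∈ Finset.Icc k n, C ((-1 : ℚ) ^ (m - k) * F m k) * E ^ m with hG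
  have hRHS : ∑ m ∈ Finset.Icc k n, C ((-1 : ℚ) ^ (m - k) * F m k) * deltaOp^[m] P
      = app G P := by
    rw [hG, app_sum]
    refine Finset.sum_congr rfl fun m _ => ?_
    rw [app_C_mul, delta_iter_eq_app hdeg m, Polynomial.smul_eq_C_mul]
  rw [hRHS, ← app_X_pow]
  -- it suffices that the coefficients of `X ^ k` and `G` agree up to degree `n`
  refine app_congr (fun j hj => ?_) hdeg
  -- key divisibility : `X ^ (n+1) ∣ G - X ^ k`
  have hdvd : X ^ (n + 1) ∣ G - X ^ k := by
    set N : ℕ := (L ^ k).natDegree + n + 2 with hN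
    have hcomp : (L ^ k).comp E = ∑ m ∈ Finset.range N, C ((L ^ k).coeff m) * E ^ m := by
      rw [comp_eq_sum_left]
      exact Polynomial.sum_over_range' _ (fun m => by rw [map_zero, zero_mul]) N (by omega)
    have hGsum : G = ∑ m ∈ Finset.range N,
        (if m ∈ Finset.Icc k n then C ((-1 : ℚ) ^ (m - k) * F m k) * E ^ m else 0) := by
      rw [hG]
      rw [Finset.sum_ite_mem]
      rw [Finset.inter_eq_right.mpr (fun m hm => by
        rw [Finset.mem_Icc] at hm; rw [Finset.mem_range]; omega)]
    have hsplit : G - X ^ k = (G - (L ^ k).comp E) + ((L ^ k).comp E - X ^ k) := by ring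
    rw [hsplit]
    refine dvd_add ?_ ?_
    · rw [hGsum, hcomp, ← Finset.sum_sub_distrib]
      refine Finset.dvd_sum fun m _ => ?_
      rcases le_or_gt m n with hmn | hmn
      · rw [coeff_Lfun_pow n k m hmn]
        by_cases hmk : m ∈ Finset.Icc k n
        · rw [if_pos hmk, sub_self]
          exact dvd_zero _
        · have hmk' : m < k := by rw [Finset.mem_Icc] at hmk; omega
          rw [if_neg hmk, F_eq_zero_of_lt hmk', mul_zero, map_zero, zero_mul, sub_zero]
          exact dvd_zero _
      · have hm' : m ∉ Finset.Icc k n := by rw [Finset.mem_Icc]; omega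
        rw [if_neg hm', zero_sub]
        refine dvd_neg.mpr (Dvd.dvd.mul_left ?_ _)
        exact dvd_trans (pow_dvd_pow X (by omega)) (pow_dvd_pow_of_dvd (X_dvd_Efun n) m)
    · rw [pow_comp]
      exact dvd_trans (key_dvd n) (sub_dvd_pow_sub_pow _ _ k)
  rw [X_pow_dvd_iff] at hdvd
  have := hdvd j (by omega)
  rw [coeff_sub, sub_eq_zero] at this
  exact this.symm
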